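/- Let S be a skeleton with head e and periphery S₀. If u, v ∈ S₀ and αu = βv for real scalars α, β with αβ > 0, then u = v. -/

import Mathlib

open Set

/-- A *skeleton* with head `e` in a real vector space `X`. -/
structure IsSkeleton {X : Type*} [AddCommGroup X] [Module ℝ X] (S : Set X) (e : X) : Prop where
  head_ne : e ≠ 0
  zero_mem : (0 : X) ∈ S
  head_mem : e ∈ S
  compl_mem : ∀ u ∈ S, e - u ∈ S
  comb : ∀ u ∈ S, ∀ v ∈ S, ∀ l : ℝ, 0 ≤ l → l ≤ 1 →
    ∃ w ∈ S \ {0, e}, ∃ a b : ℝ, 0 ≤ a ∧ 0 ≤ b ∧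
      l • u + (1 - l) • v = a • e + b • w
  head_sum : ∀ n : ℕ, 2 ≤ n → ∀ u : Fin n → X, ∀ a : Fin n → ℝ,
    (∀ i, u i ∈ S \ {0, e}) → (∀ i, 0 < a i) →
    e = ∑ i, a i • u i → ∀ j, 1 ≤ ∑ i ∈ Finset.univ.erase j, a i

/-- If `e = c • p + q` with `p, q` in the periphery and `c > 0`, then `c ≥ 1`. -/
lemma skeleton_aux
    {X : Type*} [AddCommGroup X] [Module ℝ X] {S : Set X} {e : X}
    (h : IsSkeleton S e) {p q : X} (hp : p ∈ S \ {0, e}) (hq : q ∈ S \ {0, e})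
    {c : ℝ} (hc : 0 < c) (he : e = c • p + q) : 1 ≤ c := by
  have hp' : p ∈ S ∧ ¬p = 0 ∧ ¬p = e := by simpa [not_or] using hp
  have hq' : q ∈ S ∧ ¬q = 0 ∧ ¬q = e := by simpa [not_or] using hq
  have key := h.head_sum 2 (le_refl 2) ![p, q] ![c, 1]
    (by intro i; fin_cases i <;> simpa [not_or])
    (by intro i; fin_cases i <;> simp [hc])
    (by simp [Fin.sum_univ_two, he])
    1
  have herase : (Finset.univ.erase (1 : Fin 2)) = {0} := by decide
  simpa [herase] using key

theorem skeleton_smul_eq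
    {X : Type*} [AddCommGroup X] [Module ℝ X] {S : Set X} {e : X}
    (h : IsSkeleton S e) {u v : X} (hu : u ∈ S \ {0, e}) (hv : v ∈ S \ {0, e})
    {a b : ℝ} (hab : a * b > 0) (heq : a • u = b • v) :
    u = v := by
  have ha : a ≠ 0 := by rintro rfl; simp at hab
  have ht : 0 < b / a := div_pos_iff.2 (by rcases mul_pos_iff.1 hab with ⟨h1, h2⟩ | ⟨h1, h2⟩ <;> [left; right] <;> constructor <;> linarith)
  set t : ℝ := b / a with htdef
  have huv : u = t • v := by
    have : u = a⁻¹ • (b • v) := by rw [← heq, smul_smul, inv_mul_cancel₀ ha, one_smul]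
    rw [this, smul_smul, htdef, div_eq_inv_mul]
  have hus : u ∈ S := hu.1
  have hvs : v ∈ S := hv.1
  have hu0 : u ≠ 0 := by intro h0; exact hu.2 (by simp [h0])
  have hue : u ≠ e := by intro h0; exact hu.2 (by simp [h0])
  have hv0 : v ≠ 0 := by intro h0; exact hv.2 (by simp [h0])
  have hve : v ≠ e := by intro h0; exact hv.2 (by simp [h0])
  have heu : e - u ∈ S \ {0, e} := by
    refine ⟨h.compl_mem u hus, ?_⟩
    simp only [mem_insert_iff, mem_singleton_iff, not_or, sub_eq_zero]
    exact ⟨fun hh => hue hh.symm, fun hh => hu0 (by linear_combination (norm := abel) -hh)⟩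
  have hev : e - v ∈ S \ {0, e} := by
    refine ⟨h.compl_mem v hvs, ?_⟩
    simp only [mem_insert_iff, mem_singleton_iff, not_or, sub_eq_zero]
    exact ⟨fun hh => hve hh.symm, fun hh => hv0 (by linear_combination (norm := abel) -hh)⟩
  have h1 : 1 ≤ t := skeleton_aux h hv heu ht (by rw [← huv]; abel)
  have h2 : 1 ≤ t⁻¹ := by
    refine skeleton_aux h hu hev (inv_pos.2 ht) ?_
    have : t⁻¹ • u = v := by rw [huv, smul_smul, inv_mul_cancel₀ (ne_of_gt ht), one_smul]
    rw [this]; abel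
  have : t = 1 := le_antisymm (by simpa using (one_le_inv_iff₀.1 h2).2) h1
  rw [huv, this, one_smul]
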